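/- In the localization of O(SU_q(2)) at the Ore set {b^k c^n}, for each generator x ∈ {A, B, B*} of O(S_q^2) one has R_F(x) = [q^{1/2}λ^{-1} d b^{-1}, x] and R_E(x) = −[q^{-1/2}λ^{-1} a c^{-1}, x], where λ = q − q^{-1}; explicitly e.g. [db^{-1}, B] = λ q c², using ab = qba, ac = qca, bc = cb, bd = qdb, cd = qdc, ad − qbc = 1, da − q^{-1}bc = 1, and R_F(B) = −q^{3/2}c². -/

import Mathlib

set_option maxHeartbeats 1600000

section Aux

variable {X : Type*} [Ring X] [Algebra ℂ X]

lemma aux_cont {s : ℂ} {u v w z : X} (h : u * v = s • (w * z)) :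
    ∀ x : X, u * (v * x) = s • (w * (z * x)) := fun x => by
  rw [← mul_assoc, h, smul_mul_assoc, mul_assoc]

lemma aux_cont' {u v w z : X} (h : u * v = w * z) :
    ∀ x : X, u * (v * x) = w * (z * x) := fun x => by
  rw [← mul_assoc, h, mul_assoc]

lemma aux_cont1 {u v : X} (h : u * v = 1) :
    ∀ x : X, u * (v * x) = x := fun x => by
  rw [← mul_assoc, h, one_mul]

lemma aux_inv {q : ℂ} (hq : q ≠ 0) {u v : X} (h : u * v = q • (v * u)) :
    v * u = q⁻¹ • (u * v) := by
  rw [h, smul_smul, inv_mul_cancel₀ hq, one_smul]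

end Aux

/-- In the localization of `O(SU_q(2))` at the Ore set generated by `b, c` (modeled by an
algebra in which `b` and `c` have two-sided inverses `bi, ci`), for each generator
`x ∈ {A, B, B*}` of `O(S_q²)` one has
`R_F(x) = [q^{1/2}λ⁻¹ d b⁻¹, x]` and `R_E(x) = -[q^{-1/2}λ⁻¹ a c⁻¹, x]`, where
`λ = q - q⁻¹`, with the known values `R_F(A) = q^{1/2}dc`, `R_F(B) = -q^{3/2}c²`,
`R_F(B*) = q^{1/2}d²`, `R_E(A) = q^{-3/2}ba`, `R_E(B) = -q^{-1/2}a²`,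
`R_E(B*) = q^{-3/2}b²`. -/
theorem stmt18 (q : ℝ) (hq0 : 0 < q) (hq1 : q < 1)
    {X : Type*} [Ring X] [Algebra ℂ X] (a b c d bi ci : X)
    (hab : a * b = (q : ℂ) • (b * a))
    (hac : a * c = (q : ℂ) • (c * a))
    (hbc : b * c = c * b)
    (hbd : b * d = (q : ℂ) • (d * b))
    (hcd : c * d = (q : ℂ) • (d * c))
    (had : a * d = 1 + (q : ℂ) • (b * c))
    (hda : d * a = 1 + (q : ℂ)⁻¹ • (b * c))
    (hb1 : b * bi = 1) (hb2 : bi * b = 1)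
    (hc1 : c * ci = 1) (hc2 : ci * c = 1)
    (A B Bs : X)
    (hA : A = -(q : ℂ)⁻¹ • (b * c)) (hB : B = a * c) (hBs : Bs = -(d * b)) :
    -- R_F(x) = [q^{1/2} λ⁻¹ d b⁻¹, x]
    (((Real.sqrt q : ℂ) * ((q : ℂ) - (q : ℂ)⁻¹)⁻¹) • (d * bi) * A
        - A * ((Real.sqrt q : ℂ) * ((q : ℂ) - (q : ℂ)⁻¹)⁻¹) • (d * bi)
      = (Real.sqrt q : ℂ) • (d * c)) ∧
    (((Real.sqrt q : ℂ) * ((q : ℂ) - (q : ℂ)⁻¹)⁻¹) • (d * bi) * B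
        - B * ((Real.sqrt q : ℂ) * ((q : ℂ) - (q : ℂ)⁻¹)⁻¹) • (d * bi)
      = -((q : ℂ) * (Real.sqrt q : ℂ)) • (c * c)) ∧
    (((Real.sqrt q : ℂ) * ((q : ℂ) - (q : ℂ)⁻¹)⁻¹) • (d * bi) * Bs
        - Bs * ((Real.sqrt q : ℂ) * ((q : ℂ) - (q : ℂ)⁻¹)⁻¹) • (d * bi)
      = (Real.sqrt q : ℂ) • (d * d)) ∧
    -- R_E(x) = -[q^{-1/2} λ⁻¹ a c⁻¹, x]
    (-(((Real.sqrt q : ℂ)⁻¹ * ((q : ℂ) - (q : ℂ)⁻¹)⁻¹) • (a * ci) * A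
        - A * ((Real.sqrt q : ℂ)⁻¹ * ((q : ℂ) - (q : ℂ)⁻¹)⁻¹) • (a * ci))
      = ((q : ℂ) * (Real.sqrt q : ℂ))⁻¹ • (b * a)) ∧
    (-(((Real.sqrt q : ℂ)⁻¹ * ((q : ℂ) - (q : ℂ)⁻¹)⁻¹) • (a * ci) * B
        - B * ((Real.sqrt q : ℂ)⁻¹ * ((q : ℂ) - (q : ℂ)⁻¹)⁻¹) • (a * ci))
      = -(Real.sqrt q : ℂ)⁻¹ • (a * a)) ∧
    (-(((Real.sqrt q : ℂ)⁻¹ * ((q : ℂ) - (q : ℂ)⁻¹)⁻¹) • (a * ci) * Bs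
        - Bs * ((Real.sqrt q : ℂ)⁻¹ * ((q : ℂ) - (q : ℂ)⁻¹)⁻¹) • (a * ci))
      = ((q : ℂ) * (Real.sqrt q : ℂ))⁻¹ • (b * b)) := by
  have hq : (q : ℂ) ≠ 0 := by
    exact_mod_cast ne_of_gt (show (0:ℝ) < q from hq0)
  have hs : ((Real.sqrt q : ℝ) : ℂ) ≠ 0 := by
    exact_mod_cast ne_of_gt (Real.sqrt_pos.mpr hq0)
  have hlam : (q : ℂ) - (q : ℂ)⁻¹ ≠ 0 := by
    rw [sub_ne_zero]
    intro h
    have h2 : (q : ℂ) * q = 1 := by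
      field_simp at h
      linear_combination h
    have h2' : q * q = 1 := by exact_mod_cast h2
    nlinarith
  have hqq : ((q : ℂ) ^ 2 - 1) ≠ 0 := by
    have h : (q : ℝ) ^ 2 - 1 ≠ 0 := by nlinarith
    exact_mod_cast h
  have hinv : ((q : ℂ) - (q : ℂ)⁻¹)⁻¹ = (q : ℂ) / ((q : ℂ) ^ 2 - 1) := by
    have h : (q : ℂ) - (q : ℂ)⁻¹ = ((q : ℂ) ^ 2 - 1) / (q : ℂ) := by
      field_simp
    rw [h, inv_div]
  have hD1 : (-((q : ℂ) ^ 3 * (Real.sqrt q : ℂ)) + (q : ℂ) ^ 5 * (Real.sqrt q : ℂ)) ≠ 0 := by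
    intro h
    exact (mul_ne_zero (mul_ne_zero (pow_ne_zero 3 hq) hs) hqq) (by linear_combination h)
  have hD2 : ((q : ℂ) ^ 2 * (Real.sqrt q : ℂ) ^ 2 - (q : ℂ) ^ 4 * (Real.sqrt q : ℂ) ^ 2 * 2
      + (q : ℂ) ^ 6 * (Real.sqrt q : ℂ) ^ 2) ≠ 0 := by
    intro h
    exact (mul_ne_zero (mul_ne_zero (mul_ne_zero (pow_ne_zero 2 hq) (pow_ne_zero 2 hs)) hqq)
      hqq) (by linear_combination h)
  -- cancellation rules
  have kb1 := aux_cont1 hb1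
  have kb2 := aux_cont1 hb2
  have kc1 := aux_cont1 hc1
  have kc2 := aux_cont1 hc2
  -- commutation of inverses with the other generators
  have hbia : bi * a = (q : ℂ) • (a * bi) := by
    have h := congrArg (fun x => bi * x * bi) hab
    simpa [mul_assoc, hb1, hb2, kb1, kb2, mul_smul_comm, smul_mul_assoc] using h
  have hcia : ci * a = (q : ℂ) • (a * ci) := by
    have h := congrArg (fun x => ci * x * ci) hac
    simpa [mul_assoc, hc1, hc2, kc1, kc2, mul_smul_comm, smul_mul_assoc] using h
  have hdbi : d * bi = (q : ℂ) • (bi * d) := by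
    have h := congrArg (fun x => bi * x * bi) hbd
    simpa [mul_assoc, hb1, hb2, kb1, kb2, mul_smul_comm, smul_mul_assoc] using h
  have hdci : d * ci = (q : ℂ) • (ci * d) := by
    have h := congrArg (fun x => ci * x * ci) hcd
    simpa [mul_assoc, hc1, hc2, kc1, kc2, mul_smul_comm, smul_mul_assoc] using h
  have hbid : bi * d = (q : ℂ)⁻¹ • (d * bi) := aux_inv hq hdbi
  have hcid : ci * d = (q : ℂ)⁻¹ • (d * ci) := aux_inv hq hdci
  have hcbi : c * bi = bi * c := by
    have h := congrArg (fun x => bi * x * bi) hbc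
    simpa [mul_assoc, hb1, hb2, kb1, kb2] using h
  have hbci : ci * b = b * ci := by
    have h := congrArg (fun x => ci * x * ci) hbc
    simpa [mul_assoc, hc1, hc2, kc1, kc2] using h
  have hba : b * a = (q : ℂ)⁻¹ • (a * b) := aux_inv hq hab
  have hca : c * a = (q : ℂ)⁻¹ • (a * c) := aux_inv hq hac
  -- extended (continuation) forms of all rewrite rules
  have Hba := aux_cont hba
  have Hca := aux_cont hca
  have Hbia := aux_cont hbia
  have Hcia := aux_cont hcia
  have Hbid := aux_cont hbid
  have Hcid := aux_cont hcid
  have Hcbi := aux_cont' hcbi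
  have Hbci := aux_cont' hbci
  have hcb : c * b = b * c := hbc.symm
  have Hcb := aux_cont' hcb
  have Hbd := aux_cont hbd
  have Hcd := aux_cont hcd
  have Had : ∀ x : X, a * (d * x) = x + (q : ℂ) • (b * (c * x)) := fun x => by
    rw [← mul_assoc, had, add_mul, one_mul, smul_mul_assoc, mul_assoc]
  have Hda : ∀ x : X, d * (a * x) = x + (q : ℂ)⁻¹ • (b * (c * x)) := fun x => by
    rw [← mul_assoc, hda, add_mul, one_mul, smul_mul_assoc, mul_assoc]
  subst hA hB hBs
  refine ⟨?_, ?_, ?_, ?_, ?_, ?_⟩ <;>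
    · simp only [mul_assoc, smul_mul_assoc, mul_smul_comm, smul_smul, smul_add, smul_sub,
        smul_neg, neg_smul, mul_neg, neg_mul, neg_neg, neg_sub, sub_neg_eq_add, mul_add,
        add_mul, mul_one, one_mul,
        kb1, kb2, kc1, kc2, hb1, hb2, hc1, hc2,
        Hba, Hca, Hbia, Hcia, Hbid, Hcid, Hcbi, Hbci, Hcb, Hbd, Hcd, Had, Hda,
        hba, hca, hbia, hcia, hbid, hcid, hcbi, hbci, hcb, hbd, hcd, had, hda]
      match_scalars <;>
        · simp only [hinv]
          field_simp [hq, hs, hqq, mul_inv]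
          try ring
          try linear_combination (-(Real.sqrt q : ℂ)) * inv_mul_cancel₀ hD1
          try linear_combination inv_mul_cancel₀ hD2
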